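/- Let Q = poly_Q(A) (constant term q₀) and P₀ = poly_{P₀}(A) (constant term z₀), let T > 0, and let x, u : [0,T] → H be continuous. Then the quadratic cost J = ∫₀^T (⟨x_t, Q x_t⟩ + ⟨u_t, u_t⟩) dt + ⟨x_T, P₀ x_T⟩ decomposes as J = J̆ + Σ_{ℓ=1}^d J̄^ℓ, where J̆ = ∫₀^T (q₀‖x̆_t‖² + ‖ŭ_t‖²) dt + z₀‖x̆_T‖² and J̄^ℓ = ∫₀^T (poly_Q(λ_ℓ)‖x̄_t^ℓ‖² + ‖ū_t^ℓ‖²) dt + poly_{P₀}(λ_ℓ)‖x̄_T^ℓ‖². -/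

import Mathlib

open RealInnerProductSpace

section helpers

variable {H : Type*} [NormedAddCommGroup H] [InnerProductSpace ℝ H]
variable {d : ℕ} (f : Fin d → H)

lemma sum_proj_inner (hf : Orthonormal ℝ f) (c : Fin d → ℝ) (ℓ : Fin d) :
    ⟪∑ j : Fin d, c j • f j, f ℓ⟫ = c ℓ := by
  have hite := orthonormal_iff_ite.mp hf
  rw [sum_inner, Finset.sum_eq_single ℓ]
  · rw [real_inner_smul_left, hite ℓ ℓ, if_pos rfl, mul_one]
  · intro j _ hj
    rw [real_inner_smul_left, hite j ℓ, if_neg hj, mul_zero]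
  · simp

lemma inner_self_decomp (hf : Orthonormal ℝ f) (v : H) :
    ⟪v, v⟫ = ‖v - ∑ ℓ : Fin d, ⟪v, f ℓ⟫ • f ℓ‖ ^ 2 + ∑ ℓ : Fin d, ⟪v, f ℓ⟫ ^ 2 := by
  have horth : ⟪v - ∑ ℓ : Fin d, ⟪v, f ℓ⟫ • f ℓ, ∑ ℓ : Fin d, ⟪v, f ℓ⟫ • f ℓ⟫ = 0 := by
    rw [inner_sum]
    refine Finset.sum_eq_zero fun ℓ _ => ?_
    rw [real_inner_smul_right, inner_sub_left,
      sum_proj_inner f hf (fun j => ⟪v, f j⟫) ℓ]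
    ring
  have hss : ⟪(∑ ℓ : Fin d, ⟪v, f ℓ⟫ • f ℓ : H), ∑ ℓ : Fin d, ⟪v, f ℓ⟫ • f ℓ⟫
      = ∑ ℓ : Fin d, ⟪v, f ℓ⟫ ^ 2 := by
    rw [inner_sum]
    refine Finset.sum_congr rfl fun ℓ _ => ?_
    rw [real_inner_smul_right, sum_proj_inner f hf (fun j => ⟪v, f j⟫) ℓ]
    ring
  have hv : v = (v - ∑ ℓ : Fin d, ⟪v, f ℓ⟫ • f ℓ) + ∑ ℓ : Fin d, ⟪v, f ℓ⟫ • f ℓ := by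
    abel
  calc ⟪v, v⟫
      = ⟪(v - ∑ ℓ : Fin d, ⟪v, f ℓ⟫ • f ℓ) + ∑ ℓ : Fin d, ⟪v, f ℓ⟫ • f ℓ,
          (v - ∑ ℓ : Fin d, ⟪v, f ℓ⟫ • f ℓ) + ∑ ℓ : Fin d, ⟪v, f ℓ⟫ • f ℓ⟫ := by
        rw [← hv]
    _ = ‖v - ∑ ℓ : Fin d, ⟪v, f ℓ⟫ • f ℓ‖ ^ 2 + ∑ ℓ : Fin d, ⟪v, f ℓ⟫ ^ 2 := by
        rw [inner_add_add_self, horth, hss, real_inner_self_eq_norm_sq]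
        rw [real_inner_comm]
        rw [horth]
        ring

lemma pow_apply_eig (hf : Orthonormal ℝ f) (lam : Fin d → ℝ) (A : H →L[ℝ] H)
    (hA : ∀ v : H, A v = ∑ ℓ : Fin d, (lam ℓ * ⟪v, f ℓ⟫) • f ℓ)
    (k : ℕ) (v : H) :
    (A ^ (k + 1)) v = ∑ ℓ : Fin d, (lam ℓ ^ (k + 1) * ⟪v, f ℓ⟫) • f ℓ := by
  induction k with
  | zero => simpa using hA v
  | succ k ih =>
    have h1 : (A ^ (k + 2)) v = A ((A ^ (k + 1)) v) := by
      rw [pow_succ', ContinuousLinearMap.mul_apply]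
    rw [h1, ih, hA]
    refine Finset.sum_congr rfl fun ℓ _ => ?_
    congr 1
    rw [sum_proj_inner f hf (fun j => lam j ^ (k + 1) * ⟪v, f j⟫) ℓ]
    ring

lemma inner_aeval (hf : Orthonormal ℝ f) (lam : Fin d → ℝ) (A : H →L[ℝ] H)
    (hA : ∀ v : H, A v = ∑ ℓ : Fin d, (lam ℓ * ⟪v, f ℓ⟫) • f ℓ)
    (p : Polynomial ℝ) (v : H) :
    ⟪v, (Polynomial.aeval A p) v⟫
      = p.coeff 0 * ‖v - ∑ ℓ : Fin d, ⟪v, f ℓ⟫ • f ℓ‖ ^ 2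
        + ∑ ℓ : Fin d, Polynomial.eval (lam ℓ) p * ⟪v, f ℓ⟫ ^ 2 := by
  induction p using Polynomial.induction_on' with
  | add p q hp hq =>
    simp only [map_add, ContinuousLinearMap.add_apply, inner_add_right, hp, hq,
      Polynomial.coeff_add, Polynomial.eval_add, add_mul]
    rw [Finset.sum_add_distrib]
    ring
  | monomial k c =>
    rw [Polynomial.aeval_monomial]
    have halg : (algebraMap ℝ (H →L[ℝ] H)) c = c • (1 : H →L[ℝ] H) := by
      simp [Algebra.algebraMap_eq_smul_one]
    have happ : ((algebraMap ℝ (H →L[ℝ] H)) c * A ^ k) v = c • ((A ^ k) v) := by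
      rw [halg, ContinuousLinearMap.mul_apply]
      simp
    rw [happ, real_inner_smul_right]
    cases k with
    | zero =>
      simp only [pow_zero, ContinuousLinearMap.one_apply, Polynomial.coeff_monomial,
        Polynomial.eval_monomial, if_pos rfl, mul_one]
      rw [inner_self_decomp f hf v, mul_add, Finset.mul_sum]
      simp
    | succ k =>
      rw [pow_apply_eig f hf lam A hA k v, inner_sum]
      simp only [real_inner_smul_right, Polynomial.coeff_monomial,
        Polynomial.eval_monomial, if_neg (Nat.succ_ne_zero k), zero_mul, zero_add,
        Finset.mul_sum]
      refine Finset.sum_congr rfl fun ℓ _ => ?_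
      ring

end helpers

theorem cost_functional_decomposition
    {H : Type*} [NormedAddCommGroup H] [InnerProductSpace ℝ H] [CompleteSpace H]
    {d : ℕ} (f : Fin d → H) (hf : Orthonormal ℝ f) (lam : Fin d → ℝ)
    (A : H →L[ℝ] H)
    (hA : ∀ v : H, A v = ∑ ℓ : Fin d, (lam ℓ * ⟪v, f ℓ⟫) • f ℓ)
    (polyQ polyP₀ : Polynomial ℝ) (q₀ z₀ : ℝ)
    (hq₀ : q₀ = polyQ.coeff 0) (hz₀ : z₀ = polyP₀.coeff 0)
    (Q P₀ : H →L[ℝ] H)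
    (hQ : Q = Polynomial.aeval A polyQ) (hP₀ : P₀ = Polynomial.aeval A polyP₀)
    (T : ℝ) (hT : 0 < T) (x u : ℝ → H)
    (hx : ContinuousOn x (Set.Icc 0 T)) (hu : ContinuousOn u (Set.Icc 0 T)) :
    (∫ t in (0:ℝ)..T, (⟪x t, Q (x t)⟫ + ⟪u t, u t⟫)) + ⟪x T, P₀ (x T)⟫
      = ((∫ t in (0:ℝ)..T,
            (q₀ * ‖x t - ∑ ℓ : Fin d, ⟪x t, f ℓ⟫ • f ℓ‖ ^ 2
              + ‖u t - ∑ ℓ : Fin d, ⟪u t, f ℓ⟫ • f ℓ‖ ^ 2))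
          + z₀ * ‖x T - ∑ ℓ : Fin d, ⟪x T, f ℓ⟫ • f ℓ‖ ^ 2)
        + ∑ ℓ : Fin d,
          ((∫ t in (0:ℝ)..T,
              (Polynomial.eval (lam ℓ) polyQ * ‖⟪x t, f ℓ⟫ • f ℓ‖ ^ 2
                + ‖⟪u t, f ℓ⟫ • f ℓ‖ ^ 2))
            + Polynomial.eval (lam ℓ) polyP₀ * ‖⟪x T, f ℓ⟫ • f ℓ‖ ^ 2) := by
  have hnorm : ∀ (v : H) (ℓ : Fin d), ‖⟪v, f ℓ⟫ • f ℓ‖ ^ 2 = ⟪v, f ℓ⟫ ^ 2 := by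
    intro v ℓ
    rw [norm_smul, hf.1 ℓ, mul_one, Real.norm_eq_abs, sq_abs]
  have hQpt : ∀ v : H, ⟪v, Q v⟫
      = q₀ * ‖v - ∑ ℓ : Fin d, ⟪v, f ℓ⟫ • f ℓ‖ ^ 2
        + ∑ ℓ : Fin d, Polynomial.eval (lam ℓ) polyQ * ‖⟪v, f ℓ⟫ • f ℓ‖ ^ 2 := by
    intro v
    rw [hQ, hq₀, inner_aeval f hf lam A hA polyQ v]
    congr 1
    exact Finset.sum_congr rfl fun ℓ _ => by rw [hnorm]
  have hPpt : ⟪x T, P₀ (x T)⟫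
      = z₀ * ‖x T - ∑ ℓ : Fin d, ⟪x T, f ℓ⟫ • f ℓ‖ ^ 2
        + ∑ ℓ : Fin d, Polynomial.eval (lam ℓ) polyP₀ * ‖⟪x T, f ℓ⟫ • f ℓ‖ ^ 2 := by
    rw [hP₀, hz₀, inner_aeval f hf lam A hA polyP₀ (x T)]
    congr 1
    exact Finset.sum_congr rfl fun ℓ _ => by rw [hnorm]
  have hupt : ∀ v : H, ⟪v, v⟫
      = ‖v - ∑ ℓ : Fin d, ⟪v, f ℓ⟫ • f ℓ‖ ^ 2
        + ∑ ℓ : Fin d, ‖⟪v, f ℓ⟫ • f ℓ‖ ^ 2 := by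
    intro v
    rw [inner_self_decomp f hf v]
    congr 1
    exact Finset.sum_congr rfl fun ℓ _ => by rw [hnorm]
  have huIcc : Set.uIcc (0:ℝ) T = Set.Icc 0 T := Set.uIcc_of_le hT.le
  have hcx : ∀ ℓ : Fin d, ContinuousOn (fun t => ⟪x t, f ℓ⟫) (Set.Icc 0 T) :=
    fun ℓ => hx.inner continuousOn_const
  have hcu : ∀ ℓ : Fin d, ContinuousOn (fun t => ⟪u t, f ℓ⟫) (Set.Icc 0 T) :=
    fun ℓ => hu.inner continuousOn_const
  have hig0 : IntervalIntegrable
      (fun t => q₀ * ‖x t - ∑ ℓ : Fin d, ⟪x t, f ℓ⟫ • f ℓ‖ ^ 2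
        + ‖u t - ∑ ℓ : Fin d, ⟪u t, f ℓ⟫ • f ℓ‖ ^ 2) MeasureTheory.volume 0 T := by
    apply ContinuousOn.intervalIntegrable
    rw [huIcc]
    exact (continuousOn_const.mul
        (((hx.sub (continuousOn_finset_sum _ fun ℓ _ =>
          (hcx ℓ).smul continuousOn_const)).norm).pow 2)).add
      (((hu.sub (continuousOn_finset_sum _ fun ℓ _ =>
        (hcu ℓ).smul continuousOn_const)).norm).pow 2)
  have hig : ∀ ℓ : Fin d, IntervalIntegrable
      (fun t => Polynomial.eval (lam ℓ) polyQ * ‖⟪x t, f ℓ⟫ • f ℓ‖ ^ 2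
        + ‖⟪u t, f ℓ⟫ • f ℓ‖ ^ 2) MeasureTheory.volume 0 T := by
    intro ℓ
    apply ContinuousOn.intervalIntegrable
    rw [huIcc]
    exact (continuousOn_const.mul
        ((((hcx ℓ).smul continuousOn_const).norm).pow 2)).add
      ((((hcu ℓ).smul continuousOn_const).norm).pow 2)
  have higsum : IntervalIntegrable
      (fun t => ∑ ℓ : Fin d,
        (Polynomial.eval (lam ℓ) polyQ * ‖⟪x t, f ℓ⟫ • f ℓ‖ ^ 2
          + ‖⟪u t, f ℓ⟫ • f ℓ‖ ^ 2)) MeasureTheory.volume 0 T := by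
    apply ContinuousOn.intervalIntegrable
    rw [huIcc]
    exact continuousOn_finset_sum _ fun ℓ _ =>
      (continuousOn_const.mul ((((hcx ℓ).smul continuousOn_const).norm).pow 2)).add
        ((((hcu ℓ).smul continuousOn_const).norm).pow 2)
  have h1 : (∫ t in (0:ℝ)..T, (⟪x t, Q (x t)⟫ + ⟪u t, u t⟫))
      = ∫ t in (0:ℝ)..T,
          ((q₀ * ‖x t - ∑ ℓ : Fin d, ⟪x t, f ℓ⟫ • f ℓ‖ ^ 2
            + ‖u t - ∑ ℓ : Fin d, ⟪u t, f ℓ⟫ • f ℓ‖ ^ 2)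
          + ∑ ℓ : Fin d,
            (Polynomial.eval (lam ℓ) polyQ * ‖⟪x t, f ℓ⟫ • f ℓ‖ ^ 2
              + ‖⟪u t, f ℓ⟫ • f ℓ‖ ^ 2)) := by
    refine intervalIntegral.integral_congr fun t _ => ?_
    rw [hQpt (x t), hupt (u t), Finset.sum_add_distrib]
    ring
  rw [h1, intervalIntegral.integral_add hig0 higsum,
    intervalIntegral.integral_finset_sum (fun ℓ _ => hig ℓ),
    hPpt, Finset.sum_add_distrib]
  ring
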